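/- arXiv:0808.2847 — 2 statements merged into one kernel-verified Lean document; each statement's English description precedes it below -/
import Mathlib

section
/- Let a, c : ℝ⁴ → ℝ be smooth. There exists a smooth function f : ℝ⁴ → ℝ satisfying, at every point of ℝ⁴, the three equations ∂_v f = 0, ∂_u f = 0, and (a/2)·∂_u f + (c/2)·∂_v f − ∂_x f = (1/2)·∂_v c, if and only if ∂_u ∂_v c = 0 and ∂_v ∂_v c = 0 at every point of ℝ⁴. -/
open MeasureTheory Set

/-- Coordinates on `ℝ⁴ = Fin 4 → ℝ` are `(u, v, x, y)`, indexed by `0, 1, 2, 3`.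
`pd i f` is the partial derivative of `f` in the `i`-th coordinate direction. -/
noncomputable def pd (i : Fin 4) (f : (Fin 4 → ℝ) → ℝ) (z : Fin 4 → ℝ) : ℝ :=
  fderiv ℝ f z (Pi.single i 1)

lemma pd_contDiff {g : (Fin 4 → ℝ) → ℝ} (hg : ContDiff ℝ (⊤ : ℕ∞) g) (i : Fin 4) :
    ContDiff ℝ (⊤ : ℕ∞) (pd i g) := by
  have h1 : ContDiff ℝ (⊤ : ℕ∞) (fderiv ℝ g) := hg.fderiv_right (by simp)
  exact h1.clm_apply contDiff_const

lemma pd_comm {g : (Fin 4 → ℝ) → ℝ} (hg : ContDiff ℝ (⊤ : ℕ∞) g) (i j : Fin 4)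
    (z : Fin 4 → ℝ) : pd i (pd j g) z = pd j (pd i g) z := by
  have htwo : (2 : WithTop ℕ∞) ≤ ((⊤:ℕ∞) : WithTop ℕ∞) := by
    have h := WithTop.coe_le_coe.mpr (le_top : (2:ℕ∞) ≤ ⊤)
    simpa using h
  have hone : (1 : WithTop ℕ∞) ≤ ((⊤:ℕ∞) : WithTop ℕ∞) := by
    have h := WithTop.coe_le_coe.mpr (le_top : (1:ℕ∞) ≤ ⊤)
    simpa using h
  have h2 : ContDiffAt ℝ 2 g z := (hg.contDiffAt).of_le htwo
  have hsymm := h2.isSymmSndFDerivAt (by simp)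
  have hd : DifferentiableAt ℝ (fderiv ℝ g) z :=
    ((hg.fderiv_right (m := 1) (one_add_one_eq_two.trans_le htwo)).differentiable (by simp)) z
  have key : ∀ k l : Fin 4, pd k (pd l g) z
      = fderiv ℝ (fderiv ℝ g) z (Pi.single k 1) (Pi.single l 1) := by
    intro k l
    have h3 : pd l g = fun w => (fderiv ℝ g w) (Pi.single l 1) := rfl
    rw [pd, h3, fderiv_clm_apply hd (differentiableAt_const _)]
    simp
  rw [key, key, hsymm.eq]

lemma pd_eq_lineDeriv {f : (Fin 4 → ℝ) → ℝ} {z : Fin 4 → ℝ} (hf : DifferentiableAt ℝ f z)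
    (i : Fin 4) :
    pd i f z = deriv (fun t : ℝ => f (z + t • (Pi.single i 1 : Fin 4 → ℝ))) 0 := by
  have hγ : HasDerivAt (fun t : ℝ => z + t • (Pi.single i 1 : Fin 4 → ℝ))
      (Pi.single i 1) 0 := by
    simpa using ((hasDerivAt_id (0:ℝ)).smul_const (Pi.single i 1 : Fin 4 → ℝ)).const_add z
  have hz : z + (0:ℝ) • (Pi.single i 1 : Fin 4 → ℝ) = z := by simp
  have hl : HasFDerivAt f (fderiv ℝ f z) (z + (0:ℝ) • (Pi.single i 1 : Fin 4 → ℝ)) := by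
    rw [hz]; exact hf.hasFDerivAt
  have h := hl.comp_hasDerivAt 0 hγ
  exact (h.deriv).symm

lemma const_along {g : (Fin 4 → ℝ) → ℝ} (hg : ContDiff ℝ (⊤ : ℕ∞) g) (i : Fin 4)
    (h0 : ∀ w, pd i g w = 0) (z : Fin 4 → ℝ) (t : ℝ) :
    g (z + t • (Pi.single i 1 : Fin 4 → ℝ)) = g z := by
  have hder : ∀ s : ℝ, HasDerivAt (fun t : ℝ => g (z + t • (Pi.single i 1 : Fin 4 → ℝ))) 0 s := by
    intro s
    have hγ : HasDerivAt (fun t : ℝ => z + t • (Pi.single i 1 : Fin 4 → ℝ))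
        (Pi.single i 1) s := by
      simpa using ((hasDerivAt_id s).smul_const (Pi.single i 1 : Fin 4 → ℝ)).const_add z
    have h := ((hg.differentiable (by simp)) (z + s • (Pi.single i 1 : Fin 4 → ℝ))
      ).hasFDerivAt.comp_hasDerivAt s hγ
    have h2 : fderiv ℝ g (z + s • (Pi.single i 1 : Fin 4 → ℝ)) (Pi.single i 1) = 0 := h0 _
    rwa [h2] at h
  have := is_const_of_deriv_eq_zero (𝕜 := ℝ) (fun s => (hder s).differentiableAt)
    (fun s => (hder s).deriv) t 0
  simpa using this

section Param

variable {E : Type*} [NormedAddCommGroup E] [NormedSpace ℝ E] [CompleteSpace E]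
  [SecondCountableTopology E]

/-- parametric integral over the fixed interval `[0,1]` -/
noncomputable def pint (K : ℝ × (ℝ × ℝ) → E) (p : ℝ × ℝ) : E := ∫ s in (0:ℝ)..1, K (s, p)

/-- partial derivative of `K` in the parameter -/
noncomputable def pK (K : ℝ × (ℝ × ℝ) → E) (q : ℝ × (ℝ × ℝ)) : (ℝ × ℝ) →L[ℝ] E :=
  (fderiv ℝ K q).comp (ContinuousLinearMap.inr ℝ ℝ (ℝ × ℝ))

omit [CompleteSpace E] [SecondCountableTopology E] in
lemma pK_contDiff {K : ℝ × (ℝ × ℝ) → E} (hK : ContDiff ℝ (⊤ : ℕ∞) K) :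
    ContDiff ℝ (⊤ : ℕ∞) (pK K) :=
  (hK.fderiv_right (by simp)).clm_comp contDiff_const

omit [CompleteSpace E] [SecondCountableTopology E] in
lemma hasFDerivAt_partial {K : ℝ × (ℝ × ℝ) → E} (hK : ContDiff ℝ (⊤ : ℕ∞) K)
    (s : ℝ) (p : ℝ × ℝ) : HasFDerivAt (fun x => K (s, x)) (pK K (s, p)) p := by
  have h1 : HasFDerivAt K (fderiv ℝ K (s, p)) (s, p) :=
    ((hK.differentiable (by simp)) _).hasFDerivAt
  exact h1.comp p (hasFDerivAt_prodMk_right s p)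

lemma hasFDerivAt_pint {K : ℝ × (ℝ × ℝ) → E} (hK : ContDiff ℝ (⊤ : ℕ∞) K) (p₀ : ℝ × ℝ) :
    HasFDerivAt (pint K) (pint (pK K) p₀) p₀ := by
  obtain ⟨M, hM⟩ : ∃ M, ∀ q ∈ Icc (-1:ℝ) 2 ×ˢ Metric.closedBall p₀ 1, ‖pK K q‖ ≤ M := by
    rcases (isCompact_Icc.prod (isCompact_closedBall p₀ 1)).bddAbove_image
      ((pK_contDiff hK).continuous.norm.continuousOn) with ⟨M, hM⟩
    exact ⟨M, fun q hq => hM (Set.mem_image_of_mem _ hq)⟩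
  have hKc : Continuous K := hK.continuous
  have hKc' : Continuous (pK K) := (pK_contDiff hK).continuous
  have main := intervalIntegral.hasFDerivAt_integral_of_dominated_of_fderiv_le
    (𝕜 := ℝ) (μ := volume) (F := fun x t => K (t, x)) (F' := fun x t => pK K (t, x))
    (x₀ := p₀) (a := 0) (b := 1) (bound := fun _ => M) (s := Metric.ball p₀ 1) (Metric.ball_mem_nhds p₀ zero_lt_one)
    (Filter.Eventually.of_forall fun x =>
      (hKc.comp (continuous_id.prodMk continuous_const)).aestronglyMeasurable)
    ((hKc.comp (continuous_id.prodMk continuous_const)).intervalIntegrable 0 1)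
    (hKc'.comp (continuous_id.prodMk continuous_const)).aestronglyMeasurable
    (Filter.Eventually.of_forall fun t ht x hx => by
      apply hM
      constructor
      · have h1 : t ∈ Set.Ioc (0:ℝ) 1 := by
          simpa [Set.uIoc_of_le (zero_le_one (α := ℝ))] using ht
        exact ⟨by linarith [h1.1], by linarith [h1.2]⟩
      · exact Metric.ball_subset_closedBall hx)
    intervalIntegrable_const
    (Filter.Eventually.of_forall fun t _ x _ => hasFDerivAt_partial hK t x)
  exact main

lemma contDiff_pint (n : ℕ) : ∀ {E : Type} [NormedAddCommGroup E] [NormedSpace ℝ E]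
    [CompleteSpace E] [SecondCountableTopology E] (K : ℝ × (ℝ × ℝ) → E),
    ContDiff ℝ (⊤ : ℕ∞) K → ContDiff ℝ (n : WithTop ℕ∞) (pint K) := by
  induction n with
  | zero =>
    intro E _ _ _ _ K hK
    have hd : Differentiable ℝ (pint K) := fun p => (hasFDerivAt_pint hK p).differentiableAt
    exact contDiff_zero.mpr hd.continuous
  | succ n ih =>
    intro E _ _ _ _ K hK
    have hcast : ((n + 1 : ℕ) : WithTop ℕ∞) = (n : WithTop ℕ∞) + 1 := by
      push_cast; rfl
    rw [hcast, contDiff_succ_iff_fderiv]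
    refine ⟨fun p => (hasFDerivAt_pint hK p).differentiableAt, ?_, ?_⟩
    · intro h; exact absurd h (by exact_mod_cast WithTop.natCast_ne_top n)
    · have heq : fderiv ℝ (pint K) = pint (pK K) :=
        funext fun p => (hasFDerivAt_pint hK p).fderiv
      rw [heq]
      exact ih (pK K) (pK_contDiff hK)

lemma contDiff_top_pint {K : ℝ × (ℝ × ℝ) → ℝ} (hK : ContDiff ℝ (⊤ : ℕ∞) K) :
    ContDiff ℝ (⊤ : ℕ∞) (pint K) := by
  have h : ContDiff ℝ ((⊤ : ℕ∞) : WithTop ℕ∞) (pint K) :=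
    contDiff_infty.mpr fun n => contDiff_pint n K hK
  exact h

end Param

/-- embedding `(x,y) ↦ (0,0,x,y)` -/
def emb (q : ℝ × ℝ) : Fin 4 → ℝ := fun i => if i = 2 then q.1 else if i = 3 then q.2 else 0

lemma emb_contDiff : ContDiff ℝ (⊤ : ℕ∞) emb := by
  apply contDiff_pi.mpr
  intro i
  fin_cases i <;> simp [emb] <;> fun_prop

/-- For smooth `a, c : ℝ⁴ → ℝ`, there exists a smooth `f : ℝ⁴ → ℝ` with
`∂_v f = 0`, `∂_u f = 0` and `(a/2)∂_u f + (c/2)∂_v f − ∂_x f = (1/2)∂_v c`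
everywhere, if and only if `∂_u ∂_v c = 0` and `∂_v ∂_v c = 0` everywhere. -/
theorem conformal_rescaling_system_solvable_iff
    (a c : (Fin 4 → ℝ) → ℝ)
    (ha : ContDiff ℝ (⊤ : ℕ∞) a) (hc : ContDiff ℝ (⊤ : ℕ∞) c) :
    (∃ f : (Fin 4 → ℝ) → ℝ, ContDiff ℝ (⊤ : ℕ∞) f ∧
      ∀ z : Fin 4 → ℝ,
        pd 1 f z = 0 ∧
        pd 0 f z = 0 ∧
        (a z / 2) * pd 0 f z + (c z / 2) * pd 1 f z - pd 2 f z
          = (1 / 2) * pd 1 c z) ↔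
    (∀ z : Fin 4 → ℝ, pd 0 (pd 1 c) z = 0 ∧ pd 1 (pd 1 c) z = 0) := by
  constructor
  · rintro ⟨f, hf, h⟩ z
    have hpc : pd 1 c = fun w => (-2) * pd 2 f w := by
      funext w
      obtain ⟨h1, h0, h3⟩ := h w
      rw [h1, h0] at h3
      linarith
    have hdiff2 : ∀ w, DifferentiableAt ℝ (pd 2 f) w :=
      fun w => ((pd_contDiff hf 2).differentiable (by simp)) w
    have keyi : ∀ i : Fin 4, (∀ w, pd i f w = 0) → pd i (pd 1 c) z = 0 := by
      intro i hi
      rw [hpc, pd, fderiv_const_mul (hdiff2 z) (-2)]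
      have hswap : pd i (pd 2 f) z = pd 2 (pd i f) z := pd_comm hf i 2 z
      have hz : pd i f = fun _ => (0:ℝ) := funext hi
      have h4 : pd 2 (pd i f) z = 0 := by rw [hz]; simp [pd]
      have hpd : pd i (pd 2 f) z = 0 := by rw [hswap, h4]
      simpa [pd] using hpd
    exact ⟨keyi 0 (fun w => (h w).2.1), keyi 1 (fun w => (h w).1)⟩
  · intro H
    have hpc : ContDiff ℝ (⊤ : ℕ∞) (pd 1 c) := pd_contDiff hc 1
    have hconst : ∀ z : Fin 4 → ℝ, pd 1 c z = pd 1 c (emb (z 2, z 3)) := by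
      intro z
      have h1 : pd 1 c (z + (-(z 0)) • (Pi.single 0 1 : Fin 4 → ℝ)) = pd 1 c z :=
        const_along hpc 0 (fun w => (H w).1) z _
      have h2 : pd 1 c ((z + (-(z 0)) • (Pi.single 0 1 : Fin 4 → ℝ))
            + (-(z 1)) • (Pi.single 1 1 : Fin 4 → ℝ))
          = pd 1 c (z + (-(z 0)) • (Pi.single 0 1 : Fin 4 → ℝ)) :=
        const_along hpc 1 (fun w => (H w).2) _ _
      have h3 : (z + (-(z 0)) • (Pi.single 0 1 : Fin 4 → ℝ))
          + (-(z 1)) • (Pi.single 1 1 : Fin 4 → ℝ) = emb (z 2, z 3) := by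
        funext i
        fin_cases i <;> simp [emb, Pi.single_apply] <;> ring
      rw [← h1, ← h2, h3]
    set B : ℝ × ℝ → ℝ := fun q => pd 1 c (emb q) with hB
    have hBc : ContDiff ℝ (⊤ : ℕ∞) B := hpc.comp emb_contDiff
    set K : ℝ × (ℝ × ℝ) → ℝ := fun w => B (w.2.1 * w.1, w.2.2) with hKdef
    have hKc : ContDiff ℝ (⊤ : ℕ∞) K := by
      apply hBc.comp
      fun_prop
    have hΦc : ContDiff ℝ (⊤ : ℕ∞) (pint K) := contDiff_top_pint hKc
    set F : ℝ × ℝ → ℝ := fun p => p.1 • pint K p with hF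
    have hFc : ContDiff ℝ (⊤ : ℕ∞) F := contDiff_fst.smul hΦc
    have hFeq : ∀ p : ℝ × ℝ, F p = ∫ t in (0:ℝ)..p.1, B (t, p.2) := by
      intro p
      have h := intervalIntegral.smul_integral_comp_mul_left
        (f := fun t => B (t, p.2)) (a := (0:ℝ)) (b := 1) p.1
      simpa [hF, pint, hKdef] using h
    set f : (Fin 4 → ℝ) → ℝ := fun z => (-(1/2) : ℝ) * F (z 2, z 3) with hf
    have hproj : ContDiff ℝ (⊤ : ℕ∞) (fun z : Fin 4 → ℝ => ((z 2, z 3) : ℝ × ℝ)) :=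
      ContDiff.prodMk (ContinuousLinearMap.proj (R := ℝ) (φ := fun _ : Fin 4 => ℝ) 2).contDiff
        (ContinuousLinearMap.proj (R := ℝ) (φ := fun _ : Fin 4 => ℝ) 3).contDiff
    have hfc : ContDiff ℝ (⊤ : ℕ∞) f := contDiff_const.mul (hFc.comp hproj)
    have hfd : Differentiable ℝ f := hfc.differentiable (by simp)
    refine ⟨f, hfc, fun z => ?_⟩
    have hzero : ∀ i : Fin 4, i = 0 ∨ i = 1 → pd i f z = 0 := by
      intro i hi
      rw [pd_eq_lineDeriv (hfd z) i]
      have hfun : (fun t : ℝ => f (z + t • (Pi.single i 1 : Fin 4 → ℝ))) = fun _ => f z := by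
        funext t
        have e2 : (z + t • (Pi.single i 1 : Fin 4 → ℝ)) 2 = z 2 := by
          rcases hi with h | h <;> subst h <;> simp [Pi.single_apply]
        have e3 : (z + t • (Pi.single i 1 : Fin 4 → ℝ)) 3 = z 3 := by
          rcases hi with h | h <;> subst h <;> simp [Pi.single_apply]
        simp only [hf, e2, e3]
      rw [hfun, deriv_const]
    have hBcont : Continuous fun t => B (t, z 3) :=
      hBc.continuous.comp (continuous_id.prodMk continuous_const)
    have hG : HasDerivAt (fun x : ℝ => ∫ t in (0:ℝ)..x, B (t, z 3)) (B (z 2, z 3)) (z 2) :=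
      (hBcont.integral_hasStrictDerivAt 0 (z 2)).hasDerivAt
    have hline : HasDerivAt (fun t : ℝ => f (z + t • (Pi.single 2 1 : Fin 4 → ℝ)))
        ((-(1/2)) * B (z 2, z 3)) 0 := by
      have hfun : (fun t : ℝ => f (z + t • (Pi.single 2 1 : Fin 4 → ℝ)))
          = fun t : ℝ => (-(1/2) : ℝ) * ∫ s in (0:ℝ)..(z 2 + t), B (s, z 3) := by
        funext t
        have e2 : (z + t • (Pi.single 2 1 : Fin 4 → ℝ)) 2 = z 2 + t := by simp
        have e3 : (z + t • (Pi.single 2 1 : Fin 4 → ℝ)) 3 = z 3 := by simp [Pi.single_apply]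
        rw [hf]
        simp only [e2, e3]
        rw [hFeq (z 2 + t, z 3)]
      rw [hfun]
      have hadd : HasDerivAt (fun t : ℝ => z 2 + t) 1 0 := by
        simpa using (hasDerivAt_id (0:ℝ)).const_add (z 2)
      have hcomp : HasDerivAt (fun t : ℝ => ∫ s in (0:ℝ)..(z 2 + t), B (s, z 3))
          (B (z 2, z 3) * 1) 0 := by
        have hG' : HasDerivAt (fun x : ℝ => ∫ t in (0:ℝ)..x, B (t, z 3)) (B (z 2, z 3))
            (z 2 + 0) := by rw [add_zero]; exact hG
        exact hG'.comp 0 hadd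
      simpa using hcomp.const_mul (-(1/2) : ℝ)
    have hpd2 : pd 2 f z = (-(1/2)) * B (z 2, z 3) := by
      rw [pd_eq_lineDeriv (hfd z) 2, hline.deriv]
    have hBz : B (z 2, z 3) = pd 1 c z := (hconst z).symm
    refine ⟨hzero 1 (Or.inr rfl), hzero 0 (Or.inl rfl), ?_⟩
    rw [hzero 1 (Or.inr rfl), hzero 0 (Or.inl rfl), hpd2, hBz]
    ring
end

section
/- Let F : ℝ² → ℝ be smooth, and write F_x, F_y for its two partial derivatives. On the open set Ω = {(u,v,x,y) ∈ ℝ⁴ : v ≠ 0} define a(u,v,x,y) = exp(4F(x,y))·u⁴/(3v²) + 4u·F_x(x,y), b(u,v,x,y) = exp(4F(x,y))·u² + 2v·F_y(x,y), c(u,v,x,y) = 2·exp(4F(x,y))·u³/(3v) + 2u·F_y(x,y), and χ(u,v,x,y) = 1/v. Then at every point of Ω: −a·∂_u∂_u χ − 2c·∂_u∂_v χ − b·∂_v∂_v χ + 2·∂_u∂_x χ + 2·∂_v∂_y χ − (∂_u a + ∂_v c)·∂_u χ − (∂_v b + ∂_u c)·∂_v χ = 0. -/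
/-- Partial derivative on `ℝ² = Fin 2 → ℝ`, coordinates `(x, y)` indexed by `0, 1`. -/
noncomputable def pd2 (i : Fin 2) (f : (Fin 2 → ℝ) → ℝ) (p : Fin 2 → ℝ) : ℝ :=
  fderiv ℝ f p (Pi.single i 1)

noncomputable def piL : (Fin 4 → ℝ) →L[ℝ] (Fin 2 → ℝ) :=
  ContinuousLinearMap.pi ![ContinuousLinearMap.proj 2, ContinuousLinearMap.proj 3]

lemma piL_apply (w : Fin 4 → ℝ) : piL w = ![w 2, w 3] := by
  funext j; fin_cases j <;> rfl

lemma piL_s0 : piL (Pi.single 0 1) = 0 := by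
  funext j; fin_cases j <;> simp [piL, Pi.single_apply]

lemma piL_s1 : piL (Pi.single 1 1) = 0 := by
  funext j; fin_cases j <;> simp [piL, Pi.single_apply]

lemma hprj (i : Fin 4) (w : Fin 4 → ℝ) :
    HasFDerivAt (fun w : Fin 4 → ℝ => w i)
      (ContinuousLinearMap.proj i : (Fin 4 → ℝ) →L[ℝ] ℝ) w :=
  (ContinuousLinearMap.proj i : (Fin 4 → ℝ) →L[ℝ] ℝ).hasFDerivAt

lemma hchi (w : Fin 4 → ℝ) (hw : w 1 ≠ 0) :
    HasFDerivAt (fun w : Fin 4 → ℝ => 1 / w 1)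
      (-(((w 1) ^ 2)⁻¹ • (ContinuousLinearMap.proj 1 : (Fin 4 → ℝ) →L[ℝ] ℝ))) w := by
  simpa [one_div, Function.comp_def] using (hasDerivAt_inv hw).comp_hasFDerivAt w (hprj 1 w)

lemma pd_chi (χ : (Fin 4 → ℝ) → ℝ) (hχ : ∀ z : Fin 4 → ℝ, χ z = 1 / z 1)
    (i : Fin 4) (w : Fin 4 → ℝ) (hw : w 1 ≠ 0) :
    pd i χ w = (-((w 1) ^ 2)⁻¹) * (Pi.single i 1 : Fin 4 → ℝ) 1 := by
  have hfe : χ = fun w : Fin 4 → ℝ => 1 / w 1 := funext hχ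
  rw [pd, hfe, (hchi w hw).fderiv]
  simp

/-- For the Walker metric components `a, b, c` of the Chudecki–Przanowski example
and the conformal factor `χ = 1/v`, the Walker wave operator `□χ` vanishes on
the set where `v ≠ 0`. -/
theorem box_of_conformal_factor_vanishes
    (F : (Fin 2 → ℝ) → ℝ) (hF : ContDiff ℝ (⊤ : ℕ∞) F)
    (a b c χ : (Fin 4 → ℝ) → ℝ)
    (ha : ∀ z : Fin 4 → ℝ, a z =
      Real.exp (4 * F ![z 2, z 3]) * (z 0) ^ 4 / (3 * (z 1) ^ 2)
        + 4 * z 0 * pd2 0 F ![z 2, z 3])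
    (hb : ∀ z : Fin 4 → ℝ, b z =
      Real.exp (4 * F ![z 2, z 3]) * (z 0) ^ 2 + 2 * z 1 * pd2 1 F ![z 2, z 3])
    (hc : ∀ z : Fin 4 → ℝ, c z =
      2 * Real.exp (4 * F ![z 2, z 3]) * (z 0) ^ 3 / (3 * z 1)
        + 2 * z 0 * pd2 1 F ![z 2, z 3])
    (hχ : ∀ z : Fin 4 → ℝ, χ z = 1 / z 1) :
    ∀ z : Fin 4 → ℝ, z 1 ≠ 0 →
      -(a z) * pd 0 (pd 0 χ) z - 2 * c z * pd 0 (pd 1 χ) z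
        - b z * pd 1 (pd 1 χ) z
        + 2 * pd 0 (pd 2 χ) z + 2 * pd 1 (pd 3 χ) z
        - (pd 0 a z + pd 1 c z) * pd 0 χ z
        - (pd 1 b z + pd 0 c z) * pd 1 χ z = 0 := by
  intro z hz
  have hopen : IsOpen {w : Fin 4 → ℝ | w 1 ≠ 0} :=
    isOpen_compl_singleton.preimage (continuous_apply 1)
  have hmem : {w : Fin 4 → ℝ | w 1 ≠ 0} ∈ nhds z := hopen.mem_nhds hz
  -- first derivatives of χ at z
  have hχ0 : pd 0 χ z = 0 := by rw [pd_chi χ hχ 0 z hz]; simp [Pi.single_apply]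
  have hχ1 : pd 1 χ z = -((z 1) ^ 2)⁻¹ := by rw [pd_chi χ hχ 1 z hz]; simp
  -- vanishing second derivatives: pd i χ is eventually 0 for i = 0, 2, 3
  have hev0 : ∀ i : Fin 4, i ≠ 1 → pd i χ =ᶠ[nhds z] (fun _ => (0 : ℝ)) := by
    intro i hi
    exact Filter.eventuallyEq_of_mem hmem (fun w hw => by
      rw [pd_chi χ hχ i w hw, Pi.single_apply, if_neg (Ne.symm hi), mul_zero])
  have h00 : pd 0 (pd 0 χ) z = 0 := by
    rw [pd, (hev0 0 (by decide)).fderiv_eq]; simp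
  have h02 : pd 0 (pd 2 χ) z = 0 := by
    rw [pd, (hev0 2 (by decide)).fderiv_eq]; simp
  have h13 : pd 1 (pd 3 χ) z = 0 := by
    rw [pd, (hev0 3 (by decide)).fderiv_eq]; simp
  -- second derivatives of χ via pd 1 χ
  have hev1 : pd 1 χ =ᶠ[nhds z] (fun w => -((w 1) ^ 2)⁻¹) :=
    Filter.eventuallyEq_of_mem hmem (fun w hw => by
      rw [pd_chi χ hχ 1 w hw]; simp)
  have hsq : HasFDerivAt (fun w : Fin 4 → ℝ => (w 1) ^ 2)
      ((2 * z 1 ^ 1) • (ContinuousLinearMap.proj 1 : (Fin 4 → ℝ) →L[ℝ] ℝ)) z :=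
    (hasDerivAt_pow 2 (z 1)).comp_hasFDerivAt (h₂ := fun x : ℝ => x ^ 2) z (hprj 1 z)
  have hinvsq : HasFDerivAt (fun w : Fin 4 → ℝ => -((w 1) ^ 2)⁻¹)
      (-((-(((z 1) ^ 2) ^ 2)⁻¹) • ((2 * z 1 ^ 1) •
        (ContinuousLinearMap.proj 1 : (Fin 4 → ℝ) →L[ℝ] ℝ)))) z :=
    (((hasDerivAt_inv (pow_ne_zero 2 hz)).comp_hasFDerivAt z hsq)).neg
  have h01 : pd 0 (pd 1 χ) z = 0 := by
    rw [pd, hev1.fderiv_eq, hinvsq.fderiv]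
    simp [Pi.single_apply]
  have h11 : pd 1 (pd 1 χ) z = (((z 1) ^ 2) ^ 2)⁻¹ * (2 * z 1) := by
    rw [pd, hev1.fderiv_eq, hinvsq.fderiv]
    simp
  -- derivatives of b and c
  have hFd : Differentiable ℝ F := hF.differentiable (by simp)
  have hπ : HasFDerivAt (fun w : Fin 4 → ℝ => ![w 2, w 3]) piL z := by
    have hfe : (fun w : Fin 4 → ℝ => ![w 2, w 3]) = ⇑piL :=
      funext fun w => (piL_apply w).symm
    rw [hfe]; exact piL.hasFDerivAt
  have hG : HasFDerivAt (fun w : Fin 4 → ℝ => F ![w 2, w 3])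
      ((fderiv ℝ F ![z 2, z 3]).comp piL) z :=
    (hFd ![z 2, z 3]).hasFDerivAt.comp z hπ
  have hg1 : Differentiable ℝ (fun p : Fin 2 → ℝ => pd2 1 F p) := by
    simp only [pd2]
    exact ((hF.fderiv_right (m := (⊤ : ℕ∞)) (by exact_mod_cast le_top)).clm_apply contDiff_const).differentiable (by simp)
  have hG1 : HasFDerivAt (fun w : Fin 4 → ℝ => pd2 1 F ![w 2, w 3])
      ((fderiv ℝ (fun p : Fin 2 → ℝ => pd2 1 F p) ![z 2, z 3]).comp piL) z :=
    (hg1 ![z 2, z 3]).hasFDerivAt.comp (g := fun p : Fin 2 → ℝ => pd2 1 F p) z hπ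
  have hexp : HasFDerivAt (fun w : Fin 4 → ℝ => Real.exp (4 * F ![w 2, w 3]))
      (Real.exp (4 * F ![z 2, z 3]) •
        ((4 : ℝ) • (fderiv ℝ F ![z 2, z 3]).comp piL)) z :=
    (hG.const_mul 4).exp
  -- pd 1 b
  have hbB : b = fun w : Fin 4 → ℝ =>
      Real.exp (4 * F ![w 2, w 3]) * (w 0) ^ 2 + 2 * w 1 * pd2 1 F ![w 2, w 3] :=
    funext hb
  have hsq0 : HasFDerivAt (fun w : Fin 4 → ℝ => (w 0) ^ 2)
      ((2 * z 0 ^ 1) • (ContinuousLinearMap.proj 0 : (Fin 4 → ℝ) →L[ℝ] ℝ)) z :=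
    (hasDerivAt_pow 2 (z 0)).comp_hasFDerivAt (h₂ := fun x : ℝ => x ^ 2) z (hprj 0 z)
  have hpb : pd 1 b z = 2 * pd2 1 F ![z 2, z 3] := by
    have hB := (hexp.mul hsq0).add (((hprj 1 z).const_mul 2).mul hG1)
    rw [pd, hbB]; erw [hB.fderiv]
    simp [piL_s1, Pi.single_apply]
    ring
  -- pd 0 c
  have hcC : c = fun w : Fin 4 → ℝ =>
      2 * Real.exp (4 * F ![w 2, w 3]) * (w 0) ^ 3 / (3 * w 1)
        + 2 * w 0 * pd2 1 F ![w 2, w 3] :=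
    funext hc
  have hcube : HasFDerivAt (fun w : Fin 4 → ℝ => (w 0) ^ 3)
      ((3 * z 0 ^ 2) • (ContinuousLinearMap.proj 0 : (Fin 4 → ℝ) →L[ℝ] ℝ)) z :=
    (hasDerivAt_pow 3 (z 0)).comp_hasFDerivAt (h₂ := fun x : ℝ => x ^ 3) z (hprj 0 z)
  have h3z : (3 : ℝ) * z 1 ≠ 0 := by positivity
  have hinvden : HasFDerivAt (fun w : Fin 4 → ℝ => ((3 : ℝ) * w 1)⁻¹)
      ((-(((3 : ℝ) * z 1) ^ 2)⁻¹) •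
        ((3 : ℝ) • (ContinuousLinearMap.proj 1 : (Fin 4 → ℝ) →L[ℝ] ℝ))) z :=
    (hasDerivAt_inv h3z).comp_hasFDerivAt z ((hprj 1 z).const_mul 3)
  have hpc : pd 0 c z =
      2 * Real.exp (4 * F ![z 2, z 3]) * (z 0) ^ 2 / (z 1) + 2 * pd2 1 F ![z 2, z 3] := by
    have hnum := (hexp.const_mul 2).mul hcube
    have h2 := (hnum.mul hinvden).add (((hprj 0 z).const_mul 2).mul hG1)
    have hfe : (fun w : Fin 4 → ℝ =>
        2 * Real.exp (4 * F ![w 2, w 3]) * (w 0) ^ 3 / (3 * w 1)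
          + 2 * w 0 * pd2 1 F ![w 2, w 3])
        = (fun w : Fin 4 → ℝ =>
        2 * Real.exp (4 * F ![w 2, w 3]) * (w 0) ^ 3 * ((3 : ℝ) * w 1)⁻¹
          + 2 * w 0 * pd2 1 F ![w 2, w 3]) := by
      funext w; rw [div_eq_mul_inv]
    rw [pd, hcC, hfe]; erw [h2.fderiv]
    simp [piL_s0, Pi.single_apply]
    field_simp
  -- final algebra
  rw [hχ0, hχ1, h00, h01, h02, h13, h11, hpb, hpc, hb z]
  field_simp
  ring
end
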